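/- Let a : ℕ → ℝ be a bounded sequence whose Birkhoff averages B_n diverge, with cluster set [α_0, β_0]. Let γ ∈ [α_0, β_0] and suppose there exists ε > 0 such that limsup_{i→∞} n_{i+1}(γ, ε) / n_i(γ, ε) = ∞. Then the intersection ⋂_{k≥0} [α_k, β_k] contains a point lying outside the open interval (γ − ε/2, γ + ε/2); in particular ⋂_{k≥0} [α_k, β_k] cannot be the single point {γ}. -/

import Mathlib

open Filter Topology

/-- Birkhoff averages: `birk a n = (1/n) * ∑_{i=0}^{n-1} a i` (junk value `0` at `n = 0`). -/
noncomputable def birk (a : ℕ → ℝ) (n : ℕ) : ℝ := (∑ i ∈ Finset.range n, a i) / n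

/-- Iterated Hölder means of a sequence `b` (indexed from 1):
`holderMeans b 0 n = b n` and `holderMeans b (k+1) n = (1/n) * ∑_{i=1}^n holderMeans b k i`. -/
noncomputable def holderMeans (b : ℕ → ℝ) : ℕ → ℕ → ℝ
  | 0, n => b n
  | k+1, n => (∑ i ∈ Finset.Icc 1 n, holderMeans b k i) / n

/-- Return times `n_i(γ, ε)`: the increasing enumeration (0-indexed) of
`{n ≥ 1 : γ - ε < B n < γ + ε}`. -/
noncomputable def returnTimes (B : ℕ → ℝ) (γ ε : ℝ) (i : ℕ) : ℕ :=
  Nat.nth (fun n => 1 ≤ n ∧ γ - ε < B n ∧ B n < γ + ε) i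

private lemma birk_abs_le {a : ℕ → ℝ} {C : ℝ} (hC : ∀ n, |a n| ≤ C) (n : ℕ) :
    |birk a n| ≤ C := by
  have hC0 : 0 ≤ C := le_trans (abs_nonneg _) (hC 0)
  rcases Nat.eq_zero_or_pos n with h | h
  · simp [birk, h, hC0]
  · have hsum : |∑ i ∈ Finset.range n, a i| ≤ n * C := by
      calc |∑ i ∈ Finset.range n, a i| ≤ ∑ i ∈ Finset.range n, |a i| :=
            Finset.abs_sum_le_sum_abs _ _
        _ ≤ ∑ _i ∈ Finset.range n, C := Finset.sum_le_sum fun i _ => hC i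
        _ = n * C := by simp [mul_comm]
    have hn : (0:ℝ) < n := by exact_mod_cast h
    rw [birk, abs_div, abs_of_pos hn, div_le_iff₀ hn]
    linarith [hsum]

private lemma holder_neg (b : ℕ → ℝ) : ∀ k n, holderMeans (fun m => - b m) k n = - holderMeans b k n := by
  intro k
  induction k with
  | zero => intro n; rfl
  | succ k ih =>
    intro n
    show (∑ i ∈ Finset.Icc 1 n, holderMeans (fun m => - b m) k i) / n
        = -((∑ i ∈ Finset.Icc 1 n, holderMeans b k i) / n)
    rw [show (∑ i ∈ Finset.Icc 1 n, holderMeans (fun m => - b m) k i)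
        = -∑ i ∈ Finset.Icc 1 n, holderMeans b k i by
      rw [← Finset.sum_neg_distrib]; exact Finset.sum_congr rfl fun i _ => ih i]
    rw [neg_div]

private lemma holder_abs_le {b : ℕ → ℝ} {D : ℝ} (hD : 0 ≤ D) (hb : ∀ n, |b n| ≤ D) :
    ∀ k n, |holderMeans b k n| ≤ D := by
  intro k
  induction k with
  | zero => exact hb
  | succ k ih =>
    intro n
    rcases Nat.eq_zero_or_pos n with h | h
    · show |(∑ i ∈ Finset.Icc 1 n, holderMeans b k i) / (n:ℝ)| ≤ D
      simp [h, hD]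
    · have hn : (0:ℝ) < n := by exact_mod_cast h
      have hsum : |∑ i ∈ Finset.Icc 1 n, holderMeans b k i| ≤ n * D := by
        calc |∑ i ∈ Finset.Icc 1 n, holderMeans b k i|
            ≤ ∑ i ∈ Finset.Icc 1 n, |holderMeans b k i| := Finset.abs_sum_le_sum_abs _ _
          _ ≤ ∑ _i ∈ Finset.Icc 1 n, D := Finset.sum_le_sum fun i _ => ih i
          _ = ((Finset.Icc 1 n).card : ℝ) * D := by simp [mul_comm]
          _ ≤ n * D := by
              have : (Finset.Icc 1 n).card = n := by rw [Nat.card_Icc]; omega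
              rw [this]
      show |(∑ i ∈ Finset.Icc 1 n, holderMeans b k i) / (n:ℝ)| ≤ D
      rw [abs_div, abs_of_pos hn, div_le_iff₀ hn]
      linarith [hsum]


private lemma avg_eventually_le {b : ℕ → ℝ} {D x δ : ℝ} (hb : ∀ n, |b n| ≤ D)
    (hδ : 0 < δ) (h : ∀ᶠ n in atTop, b n ≤ x) :
    ∀ᶠ n in atTop, (∑ i ∈ Finset.Icc 1 n, b i) / n ≤ x + δ := by
  have hD0 : 0 ≤ D := le_trans (abs_nonneg _) (hb 0)
  obtain ⟨N₀, hN₀⟩ := eventually_atTop.1 h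
  set N := max N₀ 1 with hNdef
  have hN1 : 1 ≤ N := le_max_right _ _
  have hN : ∀ n ≥ N, b n ≤ x := fun n hn => hN₀ n (le_trans (le_max_left _ _) hn)
  set K := max N (⌈(N : ℝ) * (D + |x|) / δ⌉₊ + 1) with hKdef
  rw [eventually_atTop]
  refine ⟨K, fun n hn => ?_⟩
  have hnN : N ≤ n := le_trans (le_max_left _ _) hn
  have hn1 : 1 ≤ n := le_trans hN1 hnN
  have hnR : (0:ℝ) < n := by exact_mod_cast hn1
  -- split the sum
  have hsplit : ∑ i ∈ Finset.Icc 1 n, b i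
      = ∑ i ∈ Finset.Ico 1 N, b i + ∑ i ∈ Finset.Ico N (n+1), b i := by
    rw [← Finset.Ico_add_one_right_eq_Icc]
    rw [Finset.sum_Ico_consecutive _ hN1 (by omega)]
  have h1 : ∑ i ∈ Finset.Ico 1 N, b i ≤ (N:ℝ) * D := by
    calc ∑ i ∈ Finset.Ico 1 N, b i ≤ ∑ _i ∈ Finset.Ico 1 N, D :=
          Finset.sum_le_sum fun i _ => (abs_le.1 (hb i)).2
      _ = ((Finset.Ico 1 N).card : ℝ) * D := by simp [mul_comm]
      _ ≤ (N:ℝ) * D := by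
          apply mul_le_mul_of_nonneg_right _ hD0
          rw [Nat.card_Ico]
          exact_mod_cast Nat.sub_le N 1
  have h2 : ∑ i ∈ Finset.Ico N (n+1), b i ≤ (n:ℝ) * x + (N:ℝ) * |x| := by
    calc ∑ i ∈ Finset.Ico N (n+1), b i ≤ ∑ _i ∈ Finset.Ico N (n+1), x :=
          Finset.sum_le_sum fun i hi => hN i (Finset.mem_Ico.1 hi).1
      _ = ((n + 1 - N : ℕ) : ℝ) * x := by simp [Nat.card_Ico, mul_comm]
      _ ≤ (n:ℝ) * x + (N:ℝ) * |x| := by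
          have hc : ((n + 1 - N : ℕ) : ℝ) = (n:ℝ) + 1 - N := by
            have : N ≤ n + 1 := by omega
            push_cast [Nat.cast_sub this]; ring
          rw [hc]
          have h1N : (1:ℝ) ≤ (N:ℝ) := by exact_mod_cast hN1
          nlinarith [abs_nonneg x, le_abs_self x, neg_abs_le x]
  have hfrac : (N:ℝ) * (D + |x|) ≤ δ * n := by
    have hKc : ((⌈(N : ℝ) * (D + |x|) / δ⌉₊ + 1 : ℕ) : ℝ) ≤ (n:ℝ) := by
      exact_mod_cast le_trans (le_max_right _ _) hn
    have hceil : (N : ℝ) * (D + |x|) / δ ≤ ⌈(N : ℝ) * (D + |x|) / δ⌉₊ := Nat.le_ceil _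
    have : (N : ℝ) * (D + |x|) / δ ≤ (n:ℝ) := by push_cast at hKc ⊢; linarith
    calc (N:ℝ) * (D + |x|) = ((N : ℝ) * (D + |x|) / δ) * δ := by field_simp
      _ ≤ (n:ℝ) * δ := mul_le_mul_of_nonneg_right this hδ.le
      _ = δ * n := by ring
  rw [div_le_iff₀ hnR, hsplit]
  linarith [h1, h2, hfrac]

private lemma avg_eventually_ge {b : ℕ → ℝ} {D x δ : ℝ} (hb : ∀ n, |b n| ≤ D)
    (hδ : 0 < δ) (h : ∀ᶠ n in atTop, x ≤ b n) :
    ∀ᶠ n in atTop, x - δ ≤ (∑ i ∈ Finset.Icc 1 n, b i) / n := by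
  have hb' : ∀ n, |(fun m => - b m) n| ≤ D := fun n => by simpa [abs_neg] using hb n
  have h' : ∀ᶠ n in atTop, (fun m => - b m) n ≤ -x := h.mono fun n hn => by simpa using neg_le_neg hn
  have := avg_eventually_le hb' hδ h'
  filter_upwards [this] with n hn
  have hsum : (∑ i ∈ Finset.Icc 1 n, (fun m => - b m) i)
      = - ∑ i ∈ Finset.Icc 1 n, b i := by rw [← Finset.sum_neg_distrib]
  rw [hsum, neg_div] at hn
  linarith


private lemma bdd_le_of_abs {f : ℕ → ℝ} {D : ℝ} (hf : ∀ n, |f n| ≤ D) :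
    IsBoundedUnder (· ≤ ·) atTop f :=
  isBoundedUnder_of ⟨D, fun n => (abs_le.1 (hf n)).2⟩

private lemma bdd_ge_of_abs {f : ℕ → ℝ} {D : ℝ} (hf : ∀ n, |f n| ≤ D) :
    IsBoundedUnder (· ≥ ·) atTop f :=
  isBoundedUnder_of ⟨-D, fun n => (abs_le.1 (hf n)).1⟩

private lemma cesaro_limsup_le {b : ℕ → ℝ} {D : ℝ} (hb : ∀ n, |b n| ≤ D)
    (hc : ∀ n : ℕ, |(∑ i ∈ Finset.Icc 1 n, b i) / (n:ℝ)| ≤ D) :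
    limsup (fun n : ℕ => (∑ i ∈ Finset.Icc 1 n, b i) / (n:ℝ)) atTop ≤ limsup b atTop := by
  set c : ℕ → ℝ := fun n => (∑ i ∈ Finset.Icc 1 n, b i) / (n:ℝ) with hcdef
  have key : ∀ δ : ℝ, 0 < δ → limsup c atTop ≤ limsup b atTop + δ := by
    intro δ hδ
    have h1 : ∀ᶠ n in atTop, b n ≤ limsup b atTop + δ / 2 :=
      (eventually_lt_of_limsup_lt (lt_add_of_pos_right _ (by linarith)) (bdd_le_of_abs hb)).mono
        fun n hn => hn.le
    have h2 := avg_eventually_le hb (show (0:ℝ) < δ/2 by linarith) h1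
    have h3 : ∀ᶠ n in atTop, c n ≤ limsup b atTop + δ := h2.mono fun n hn => by
      simpa [hcdef] using le_trans hn (by linarith)
    exact limsup_le_of_le ((bdd_ge_of_abs hc).isCoboundedUnder_le) h3
  by_contra hlt
  push_neg at hlt
  have := key ((limsup c atTop - limsup b atTop)/2) (by linarith)
  linarith

private lemma cesaro_le_liminf {b : ℕ → ℝ} {D : ℝ} (hb : ∀ n, |b n| ≤ D)
    (hc : ∀ n : ℕ, |(∑ i ∈ Finset.Icc 1 n, b i) / (n:ℝ)| ≤ D) :
    liminf b atTop ≤ liminf (fun n : ℕ => (∑ i ∈ Finset.Icc 1 n, b i) / (n:ℝ)) atTop := by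
  set c : ℕ → ℝ := fun n => (∑ i ∈ Finset.Icc 1 n, b i) / (n:ℝ) with hcdef
  have key : ∀ δ : ℝ, 0 < δ → liminf b atTop - δ ≤ liminf c atTop := by
    intro δ hδ
    have h1 : ∀ᶠ n in atTop, liminf b atTop - δ / 2 ≤ b n :=
      (eventually_lt_of_lt_liminf (by linarith) (bdd_ge_of_abs hb)).mono fun n hn => hn.le
    have h2 := avg_eventually_ge hb (show (0:ℝ) < δ/2 by linarith) h1
    have h3 : ∀ᶠ n in atTop, liminf b atTop - δ ≤ c n := h2.mono fun n hn => by
      have : liminf b atTop - δ ≤ liminf b atTop - δ / 2 - δ / 2 := by linarith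
      simpa [hcdef] using le_trans this hn
    exact le_liminf_of_le ((bdd_le_of_abs hc).isCoboundedUnder_ge) h3
  by_contra hlt
  push_neg at hlt
  have := key ((liminf b atTop - liminf c atTop)/2) (by linarith)
  linarith


set_option maxHeartbeats 1000000 in
private lemma engine {b : ℕ → ℝ} {D c : ℝ} (hD : 0 ≤ D) (hb : ∀ n, |b n| ≤ D)
    (h0 : ∀ R : ℝ, ∀ N : ℕ, ∃ p q : ℕ, N ≤ p ∧ 1 ≤ p ∧ R * p ≤ q ∧
      ∀ j : ℕ, p ≤ j → j ≤ q → c ≤ b j) :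
    ∀ k : ℕ, ∀ δ : ℝ, 0 < δ → ∀ R : ℝ, ∀ N : ℕ, ∃ p q : ℕ, N ≤ p ∧ 1 ≤ p ∧ R * p ≤ q ∧
      ∀ j : ℕ, p ≤ j → j ≤ q → c - δ ≤ holderMeans b k j := by
  intro k
  induction k with
  | zero =>
    intro δ hδ R N
    obtain ⟨p, q, h1, h2, h3, h4⟩ := h0 R N
    exact ⟨p, q, h1, h2, h3, fun j hj hj' => by
      have := h4 j hj hj'
      show c - δ ≤ b j
      linarith⟩
  | succ k ih =>
    intro δ hδ R N
    obtain ⟨E, hE⟩ : ∃ E : ℝ, E = D + |c| + δ := ⟨_, rfl⟩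
    have hE0 : 0 < E := by have := abs_nonneg c; rw [hE]; linarith
    obtain ⟨M, hM⟩ : ∃ M : ℝ, M = 2 * E / δ + 1 := ⟨_, rfl⟩
    have hM1 : (1:ℝ) ≤ M := by
      have : 0 ≤ 2 * E / δ := by positivity
      rw [hM]; linarith
    have hM0 : (0:ℝ) < M := by linarith
    have hME : δ * M = 2 * E + δ := by rw [hM]; field_simp
    obtain ⟨p, q, hNp, hp1, hRq, hba⟩ := ih (δ/2) (by linarith) ((max R 1) * (M + 1)) N
    have hpR : (0:ℝ) < p := by exact_mod_cast hp1
    have h1p : (1:ℝ) ≤ (p:ℝ) := by exact_mod_cast hp1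
    obtain ⟨p', hp'⟩ : ∃ p' : ℕ, p' = ⌈M * (p:ℝ)⌉₊ := ⟨_, rfl⟩
    have hMp_le : M * (p:ℝ) ≤ (p':ℝ) := by rw [hp']; exact Nat.le_ceil _
    have hp'_le : (p':ℝ) ≤ (M + 1) * p := by
      have h : (⌈M * (p:ℝ)⌉₊ : ℝ) < M * p + 1 := Nat.ceil_lt_add_one (by positivity)
      rw [hp']
      nlinarith
    have hpp' : p ≤ p' := by
      have : (p:ℝ) ≤ (p':ℝ) := le_trans (by nlinarith) hMp_le
      exact_mod_cast this
    have hmax1 : (1:ℝ) ≤ max R 1 := le_max_right _ _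
    have hq' : (p':ℝ) ≤ (q:ℝ) := by
      calc (p':ℝ) ≤ (M+1) * p := hp'_le
        _ ≤ (max R 1) * (M+1) * p := by nlinarith
        _ ≤ q := hRq
    have hp'q : p' ≤ q := by exact_mod_cast hq'
    refine ⟨p', q, le_trans hNp hpp', le_trans hp1 hpp', ?_, ?_⟩
    · have hp'0 : (0:ℝ) ≤ (p':ℝ) := by positivity
      calc R * (p':ℝ) ≤ (max R 1) * p' := by nlinarith [le_max_left R 1]
        _ ≤ (max R 1) * ((M+1) * p) := by nlinarith
        _ = (max R 1) * (M+1) * p := by ring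
        _ ≤ q := hRq
    · intro j hj hjq
      have hj1 : 1 ≤ j := le_trans (le_trans hp1 hpp') hj
      have hjR : (0:ℝ) < j := by exact_mod_cast hj1
      have hpj : p ≤ j := le_trans hpp' hj
      have hsplit : ∑ i ∈ Finset.Icc 1 j, holderMeans b k i
          = ∑ i ∈ Finset.Ico 1 p, holderMeans b k i
            + ∑ i ∈ Finset.Ico p (j+1), holderMeans b k i := by
        rw [← Finset.Ico_add_one_right_eq_Icc, Finset.sum_Ico_consecutive _ hp1 (by omega)]
      have habs := holder_abs_le hD hb k
      have h1 : -((p:ℝ) * D) ≤ ∑ i ∈ Finset.Ico 1 p, holderMeans b k i := by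
        have hlow := Finset.sum_le_sum
          (fun i (_ : i ∈ Finset.Ico 1 p) => (abs_le.1 (habs i)).1)
        rw [Finset.sum_const, nsmul_eq_mul] at hlow
        have hcard : ((Finset.Ico 1 p).card : ℝ) ≤ (p:ℝ) := by
          rw [Nat.card_Ico]; exact_mod_cast Nat.sub_le p 1
        have := mul_le_mul_of_nonneg_right hcard hD
        linarith
      obtain ⟨c', hc'⟩ : ∃ c' : ℝ, c' = c - δ/2 := ⟨_, rfl⟩
      have hc'abs : |c'| ≤ |c| + δ/2 := by
        rw [hc']
        calc |c - δ/2| ≤ |c| + |δ/2| := abs_sub _ _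
          _ = |c| + δ/2 := by rw [abs_of_pos (by linarith : (0:ℝ) < δ/2)]
      have h2 : (j:ℝ) * c' - (p:ℝ) * |c'| ≤ ∑ i ∈ Finset.Ico p (j+1), holderMeans b k i := by
        have hlow := Finset.sum_le_sum
          (fun i (hi : i ∈ Finset.Ico p (j+1)) => by
            have hmem := Finset.mem_Ico.1 hi
            have := hba i hmem.1 (by omega)
            rw [← hc'] at this
            exact this)
        rw [Finset.sum_const, nsmul_eq_mul] at hlow
        have hcard : ((Finset.Ico p (j+1)).card : ℝ) = (j:ℝ) + 1 - p := by
          rw [Nat.card_Ico]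
          have hple : p ≤ j + 1 := by omega
          push_cast [Nat.cast_sub hple]
          ring
        rw [hcard] at hlow
        nlinarith [le_abs_self c', neg_abs_le c']
      have hfrac : (p:ℝ) * (D + |c'|) ≤ (j:ℝ) * (δ/2) := by
        have hjM : M * (p:ℝ) ≤ (j:ℝ) := by
          have : (p':ℝ) ≤ (j:ℝ) := by exact_mod_cast hj
          linarith
        have hDc' : D + |c'| ≤ E := by rw [hE]; linarith [hc'abs]
        have h1' : (p:ℝ) * (D + |c'|) ≤ (p:ℝ) * E := by nlinarith [abs_nonneg c']
        have h2' : M * ((p:ℝ) * E) ≤ M * ((j:ℝ) * (δ/2)) := by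
          calc M * ((p:ℝ) * E) = (M * p) * E := by ring
            _ ≤ (j:ℝ) * E := by nlinarith
            _ = (j:ℝ) * ((2 * E + δ)/2) - (j:ℝ) * (δ/2) := by ring
            _ ≤ (j:ℝ) * ((δ * M)/2) - (j:ℝ) * (δ/2) := by rw [hME]
            _ ≤ M * ((j:ℝ) * (δ/2)) := by ring_nf; nlinarith
        have := (mul_le_mul_iff_right₀ hM0).1 h2'
        linarith
      show c - δ ≤ (∑ i ∈ Finset.Icc 1 j, holderMeans b k i) / (j:ℝ)
      rw [le_div_iff₀ hjR, hsplit]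
      have hcc' : c - δ = c' - δ/2 := by rw [hc']; ring
      rw [hcc']
      nlinarith [h1, h2, hfrac, abs_nonneg c']

set_option maxHeartbeats 1000000 in
/-- **Lemma 2.**  Let `a` be bounded with divergent Birkhoff averages `B_n`, with
cluster set `[α₀, β₀]`.  Let `γ ∈ [α₀, β₀]` and suppose there is `ε > 0` with
`limsup_i n_{i+1}(γ, ε)/n_i(γ, ε) = ∞`.  Then `⋂_k [α_k, β_k]` contains a point
outside the open interval `(γ - ε/2, γ + ε/2)`; in particular it is not the
singleton `{γ}`. -/
theorem inter_holder_intervals_not_singleton (a : ℕ → ℝ)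
    (hbdd : ∃ C : ℝ, ∀ n, |a n| ≤ C)
    (hdiv : ¬ ∃ L : ℝ, Tendsto (birk a) atTop (𝓝 L))
    (γ : ℝ) (hγ : γ ∈ Set.Icc (liminf (birk a) atTop) (limsup (birk a) atTop))
    (ε : ℝ) (hε : 0 < ε)
    (hlim : limsup (fun i : ℕ => (((returnTimes (birk a) γ ε (i + 1) : ℝ) /
      (returnTimes (birk a) γ ε i : ℝ) : ℝ) : EReal)) atTop = ⊤) :
    (∃ x : ℝ,
      x ∈ (⋂ k : ℕ, Set.Icc (liminf (fun n : ℕ => holderMeans (birk a) k n) atTop)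
        (limsup (fun n : ℕ => holderMeans (birk a) k n) atTop)) ∧
      x ∉ Set.Ioo (γ - ε / 2) (γ + ε / 2)) ∧
    (⋂ k : ℕ, Set.Icc (liminf (fun n : ℕ => holderMeans (birk a) k n) atTop)
      (limsup (fun n : ℕ => holderMeans (birk a) k n) atTop)) ≠ {γ} := by
  classical
  obtain ⟨C, hC⟩ := hbdd
  have hC0 : 0 ≤ C := le_trans (abs_nonneg _) (hC 0)
  set B : ℕ → ℝ := birk a with hB
  have hBabs : ∀ n, |B n| ≤ C := fun n => birk_abs_le hC n
  set S : ℕ → Prop := fun n => 1 ≤ n ∧ γ - ε < B n ∧ B n < γ + ε with hS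
  have hret : ∀ i, returnTimes B γ ε i = Nat.nth S i := fun i => rfl
  -- Step 1 : S is infinite
  have hSinf : (setOf S).Infinite := by
    by_contra hfin
    rw [Set.not_infinite] at hfin
    have hev : ∀ᶠ i in atTop, (((returnTimes B γ ε (i + 1) : ℝ) /
        (returnTimes B γ ε i : ℝ) : ℝ) : EReal) = ((0:ℝ) : EReal) := by
      filter_upwards [eventually_ge_atTop hfin.toFinset.card] with i hi
      have h1 : returnTimes B γ ε i = 0 := Nat.nth_of_card_le hfin hi
      have h2 : returnTimes B γ ε (i+1) = 0 := Nat.nth_of_card_le hfin (le_trans hi (Nat.le_succ i))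
      rw [h1, h2]
      norm_num
    rw [limsup_congr hev] at hlim
    rw [limsup_const ((0:ℝ) : EReal)] at hlim
    exact (EReal.zero_ne_top) hlim
  -- Step 2 : slow variation
  have hrec : ∀ n : ℕ, B (n+1) - B n = (a n - B n) / (n+1) := by
    intro n
    rcases Nat.eq_zero_or_pos n with h | h
    · subst h
      simp [hB, birk]
    · have hn : (n:ℝ) ≠ 0 := by positivity
      have hsum : (∑ i ∈ Finset.range n, a i) = (n:ℝ) * B n := by
        rw [hB]; show _ = (n:ℝ) * ((∑ i ∈ Finset.range n, a i) / n)
        field_simp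
      have hBn1 : B (n+1) = ((n:ℝ) * B n + a n) / ((n:ℝ)+1) := by
        rw [hB]
        show (∑ i ∈ Finset.range (n+1), a i) / ((n:ℕ)+1 : ℕ) = _
        rw [Finset.sum_range_succ, hsum]
        push_cast
        rw [hB]
      rw [hBn1]
      have hn1 : ((n:ℝ)+1) ≠ 0 := by positivity
      field_simp
      ring
  have hstep : ∃ Nst : ℕ, ∀ n, Nst ≤ n → |B (n+1) - B n| ≤ ε := by
    refine ⟨⌈2*C/ε⌉₊, fun n hn => ?_⟩
    rw [hrec n]
    have hn1 : (0:ℝ) < (n:ℝ)+1 := by positivity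
    rw [abs_div, abs_of_pos hn1, div_le_iff₀ hn1]
    have h1 : |a n - B n| ≤ 2*C := by
      have := hC n; have := hBabs n
      have := abs_sub (a n) (B n)
      linarith
    have h2 : 2*C/ε ≤ (n:ℝ) + 1 := by
      have := Nat.le_ceil (2*C/ε)
      have hcast : ((⌈2*C/ε⌉₊ : ℕ):ℝ) ≤ (n:ℝ) := by exact_mod_cast hn
      linarith
    have h3 : 2*C ≤ ε * ((n:ℝ)+1) := by
      rw [div_le_iff₀ hε] at h2
      linarith
    linarith
  obtain ⟨Nst, hNst⟩ := hstep
  -- Step 3 : no S-elements strictly between consecutive return times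
  have hnoS : ∀ i j : ℕ, Nat.nth S i < j → j < Nat.nth S (i+1) → ¬ S j := by
    intro i j h1 h2 hSj
    have hcnt1 : Nat.count S (Nat.nth S i + 1) = i + 1 :=
      Nat.count_nth_succ_of_infinite hSinf i
    have hcnt2 : i + 1 ≤ Nat.count S j := by
      rw [← hcnt1]; exact Nat.count_monotone S (by omega)
    have := Nat.nth_monotone hSinf hcnt2
    rw [Nat.nth_count hSj] at this
    omega
  -- Step 4 : one-sided long excursions
  have hfreq : ∀ R : ℝ, ∃ᶠ i in atTop,
      R < (returnTimes B γ ε (i+1) : ℝ) / (returnTimes B γ ε i : ℝ) := by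
    intro R
    have hbot : IsBoundedUnder (· ≥ ·) atTop (fun i : ℕ =>
        (((returnTimes B γ ε (i + 1) : ℝ) / (returnTimes B γ ε i : ℝ) : ℝ) : EReal)) :=
      isBoundedUnder_of ⟨⊥, fun _ => bot_le⟩
    have hcob := hbot.isCoboundedUnder_le
    have h := frequently_lt_of_lt_limsup hcob (by rw [hlim]; exact EReal.coe_lt_top R)
    exact h.mono fun i hi => by exact_mod_cast hi
  have hgap : ∀ R : ℝ, 1 ≤ R → ∀ N : ℕ, ∃ p q : ℕ, N ≤ p ∧ 1 ≤ p ∧ R * p ≤ q ∧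
      ((∀ j, p ≤ j → j ≤ q → γ + ε ≤ B j) ∨ (∀ j, p ≤ j → j ≤ q → B j ≤ γ - ε)) := by
    intro R hR N
    obtain ⟨i, hrat, hi_ge⟩ :=
      ((hfreq (2*R+2)).and_eventually (eventually_ge_atTop (max N Nst))).exists
    set ni : ℕ := Nat.nth S i with hni
    set ni1 : ℕ := Nat.nth S (i+1) with hni1
    have hSni : S ni := Nat.nth_mem_of_infinite hSinf i
    have hni_pos : 1 ≤ ni := hSni.1
    have hni_ge : max N Nst ≤ ni := le_trans hi_ge (Nat.nth_strictMono hSinf).le_apply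
    have hniR : (0:ℝ) < ni := by exact_mod_cast hni_pos
    have hratR : (2*R+2) * (ni:ℝ) < (ni1:ℝ) := by
      rw [hret, hret, ← hni, ← hni1] at hrat
      rw [lt_div_iff₀ hniR] at hrat
      linarith [hrat]
    have h1ni : (1:ℝ) ≤ (ni:ℝ) := by exact_mod_cast hni_pos
    have hgap2 : ni + 2 ≤ ni1 := by
      have : ((ni:ℝ)) + 2 < (ni1:ℝ) := by nlinarith
      exact_mod_cast this.le
    -- the interval (ni, ni1) is one-sided
    have houtside : ∀ j, ni < j → j < ni1 → B j ≤ γ - ε ∨ γ + ε ≤ B j := by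
      intro j hj1 hj2
      have hnS := hnoS i j hj1 hj2
      simp only [hS] at hnS
      push_neg at hnS
      have h1j : 1 ≤ j := by omega
      rcases le_or_gt (B j) (γ - ε) with h | h
      · exact Or.inl h
      · exact Or.inr (hnS h1j h)
    have honeside : (∀ j, ni + 1 ≤ j → j ≤ ni1 - 1 → γ + ε ≤ B j) ∨
        (∀ j, ni + 1 ≤ j → j ≤ ni1 - 1 → B j ≤ γ - ε) := by
      have hNst_ni : Nst ≤ ni := le_trans (le_max_right _ _) hni_ge
      rcases houtside (ni+1) (by omega) (by omega) with h | h
      · right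
        intro j hj hj'
        induction j with
        | zero => omega
        | succ m ihm =>
          rcases Nat.lt_or_ge m (ni + 1) with hm | hm
          · have : m = ni := by omega
            subst this; exact h
          · have hBm : B m ≤ γ - ε := ihm (by omega) (by omega)
            have hstepm : |B (m+1) - B m| ≤ ε := hNst m (by omega)
            have hout := houtside (m+1) (by omega) (by omega)
            rcases hout with h' | h'
            · exact h'
            · exfalso
              have := abs_le.1 hstepm
              linarith
      · left
        intro j hj hj'
        induction j with
        | zero => omega
        | succ m ihm =>
          rcases Nat.lt_or_ge m (ni + 1) with hm | hm
          · have : m = ni := by omega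
            subst this; exact h
          · have hBm : γ + ε ≤ B m := ihm (by omega) (by omega)
            have hstepm : |B (m+1) - B m| ≤ ε := hNst m (by omega)
            have hout := houtside (m+1) (by omega) (by omega)
            rcases hout with h' | h'
            · exfalso
              have := abs_le.1 hstepm
              linarith
            · exact h'
    refine ⟨ni + 1, ni1 - 1, by omega, by omega, ?_, ?_⟩
    · have hcast : ((ni1 - 1 : ℕ):ℝ) = (ni1:ℝ) - 1 := by
        have : 1 ≤ ni1 := by omega
        push_cast [Nat.cast_sub this]; ring
      rw [hcast]
      push_cast
      nlinarith
    · rcases honeside with h | h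
      · exact Or.inl h
      · exact Or.inr h
  -- Step 5 : a single side works for all R
  have hside : (∀ R : ℝ, ∀ N : ℕ, ∃ p q : ℕ, N ≤ p ∧ 1 ≤ p ∧ R * p ≤ q ∧
        ∀ j, p ≤ j → j ≤ q → γ + ε ≤ B j) ∨
      (∀ R : ℝ, ∀ N : ℕ, ∃ p q : ℕ, N ≤ p ∧ 1 ≤ p ∧ R * p ≤ q ∧
        ∀ j, p ≤ j → j ≤ q → B j ≤ γ - ε) := by
    by_cases h : ∀ R : ℝ, ∀ N : ℕ, ∃ p q : ℕ, N ≤ p ∧ 1 ≤ p ∧ R * p ≤ q ∧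
        ∀ j, p ≤ j → j ≤ q → γ + ε ≤ B j
    · exact Or.inl h
    · right
      push_neg at h
      obtain ⟨R₀, N₀, hR₀⟩ := h
      intro R N
      obtain ⟨p, q, h1, h2, h3, h4⟩ := hgap (max 1 (max R R₀)) (le_max_left _ _) (max N N₀)
      have hp0 : (0:ℝ) ≤ (p:ℝ) := by positivity
      rcases h4 with h4 | h4
      · exfalso
        obtain ⟨j, hj1, hj2, hj3⟩ := hR₀ p q (le_trans (le_max_right _ _) h1) h2
          (le_trans (mul_le_mul_of_nonneg_right
            (le_trans (le_max_right R R₀) (le_max_right 1 _)) hp0) h3)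
        exact absurd (h4 j hj1 hj2) (by linarith)
      · exact ⟨p, q, le_trans (le_max_left _ _) h1, h2,
          le_trans (mul_le_mul_of_nonneg_right
            (le_trans (le_max_left R R₀) (le_max_right 1 _)) hp0) h3, h4⟩
  -- Step 6 : Hölder means framework
  have hHabs : ∀ k n, |holderMeans B k n| ≤ C := holder_abs_le hC0 hBabs
  set α : ℕ → ℝ := fun k => liminf (fun n : ℕ => holderMeans B k n) atTop with hα
  set β : ℕ → ℝ := fun k => limsup (fun n : ℕ => holderMeans B k n) atTop with hβ
  have hstepβ : ∀ k, β (k+1) ≤ β k := by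
    intro k
    have h := cesaro_limsup_le (hHabs k) (fun n => hHabs (k+1) n)
    exact h
  have hstepα : ∀ k, α k ≤ α (k+1) := by
    intro k
    have h := cesaro_le_liminf (hHabs k) (fun n => hHabs (k+1) n)
    exact h
  have hαmono : Monotone α := monotone_nat_of_le_succ hstepα
  have hβanti : Antitone β := antitone_nat_of_succ_le hstepβ
  have hαβ : ∀ k, α k ≤ β k := fun k =>
    liminf_le_limsup (bdd_le_of_abs (hHabs k)) (bdd_ge_of_abs (hHabs k))
  have hcross : ∀ j k, α j ≤ β k := by
    intro j k
    rcases le_total j k with h | h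
    · exact le_trans (hαmono h) (hαβ k)
    · exact le_trans (hαβ j) (hβanti h)
  -- Step 7 : conclude in each case
  have main : ∃ x : ℝ,
      x ∈ (⋂ k : ℕ, Set.Icc (α k) (β k)) ∧ x ∉ Set.Ioo (γ - ε / 2) (γ + ε / 2) := by
    rcases hside with hup | hdown
    · -- β k ≥ γ + ε for all k
      have hβge : ∀ k, γ + ε ≤ β k := by
        intro k
        have hfr : ∀ δ : ℝ, 0 < δ → γ + ε - δ ≤ β k := by
          intro δ hδ
          have hfr2 : ∃ᶠ n in atTop, γ + ε - δ ≤ holderMeans B k n := by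
            rw [frequently_atTop]
            intro N
            obtain ⟨p, q, h1, h2, h3, h4⟩ := engine hC0 hBabs hup k δ hδ 1 N
            have hpq : p ≤ q := by
              have : (p:ℝ) ≤ (q:ℝ) := by simpa using h3
              exact_mod_cast this
            exact ⟨p, h1, h4 p le_rfl hpq⟩
          exact le_limsup_of_frequently_le hfr2 (bdd_le_of_abs (hHabs k))
        by_contra hlt
        push_neg at hlt
        have := hfr ((γ + ε - β k)/2) (by linarith)
        linarith
      have hbddbelow : BddBelow (Set.range β) := by
        refine ⟨α 0, ?_⟩
        rintro x ⟨k, rfl⟩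
        exact hcross 0 k
      refine ⟨⨅ k, β k, ?_, ?_⟩
      · rw [Set.mem_iInter]
        intro k
        exact ⟨le_ciInf fun j => hcross k j, ciInf_le hbddbelow k⟩
      · intro hx
        have h1 : γ + ε ≤ ⨅ k, β k := le_ciInf hβge
        have h2 := hx.2
        linarith
    · -- α k ≤ γ - ε for all k : use engine with -B
      have hBnegabs : ∀ n, |(fun m => - B m) n| ≤ C := fun n => by
        simpa [abs_neg] using hBabs n
      have hdown' : ∀ R : ℝ, ∀ N : ℕ, ∃ p q : ℕ, N ≤ p ∧ 1 ≤ p ∧ R * p ≤ q ∧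
          ∀ j, p ≤ j → j ≤ q → -(γ - ε) ≤ (fun m => - B m) j := by
        intro R N
        obtain ⟨p, q, h1, h2, h3, h4⟩ := hdown R N
        exact ⟨p, q, h1, h2, h3, fun j hj hj' => by
          have := h4 j hj hj'
          simp only
          linarith⟩
      have hαle : ∀ k, α k ≤ γ - ε := by
        intro k
        have hfr : ∀ δ : ℝ, 0 < δ → α k ≤ γ - ε + δ := by
          intro δ hδ
          have hfr2 : ∃ᶠ n in atTop, holderMeans B k n ≤ γ - ε + δ := by
            rw [frequently_atTop]
            intro N
            obtain ⟨p, q, h1, h2, h3, h4⟩ := engine hC0 hBnegabs hdown' k δ hδ 1 N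
            have hpq : p ≤ q := by
              have : (p:ℝ) ≤ (q:ℝ) := by simpa using h3
              exact_mod_cast this
            have := h4 p le_rfl hpq
            rw [holder_neg B k p] at this
            exact ⟨p, h1, by linarith⟩
          exact liminf_le_of_frequently_le hfr2 (bdd_ge_of_abs (hHabs k))
        by_contra hlt
        push_neg at hlt
        have := hfr ((α k - (γ - ε))/2) (by linarith)
        linarith
      have hbddabove : BddAbove (Set.range α) := by
        refine ⟨β 0, ?_⟩
        rintro x ⟨k, rfl⟩
        exact hcross k 0
      refine ⟨⨆ k, α k, ?_, ?_⟩
      · rw [Set.mem_iInter]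
        intro k
        exact ⟨le_ciSup hbddabove k, ciSup_le fun j => hcross j k⟩
      · intro hx
        have h1 : (⨆ k, α k) ≤ γ - ε := ciSup_le hαle
        have h2 := hx.1
        linarith
  obtain ⟨x, hx1, hx2⟩ := main
  refine ⟨⟨x, hx1, hx2⟩, ?_⟩
  intro hEq
  rw [hEq] at hx1
  rw [Set.mem_singleton_iff] at hx1
  subst hx1
  exact hx2 ⟨by linarith, by linarith⟩
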